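/- arXiv:2011.08369 — 4 statements merged into one kernel-verified Lean document; each statement's English description precedes it below -/
import Mathlib

section
/- For every ξ′ = (ξ₁,ξ₂) ∈ ℝ², the four vectors h₊,₁(ξ′), h₊,₂(ξ′), h₋,₁(ξ′), h₋,₂(ξ′) in ℂ⁴ are pairwise orthogonal with respect to the inner product ⟨u,v⟩ = Σᵢ uᵢ·conj(vᵢ), and each has squared norm ‖h±,ⱼ(ξ′)‖² = 2|ξ′|². -/
open Matrix Complex

noncomputable section

/-- Pauli matrices -/
def σ1 : Matrix (Fin 2) (Fin 2) ℂ := !![0, 1; 1, 0]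
def σ2 : Matrix (Fin 2) (Fin 2) ℂ := !![0, -I; I, 0]
def σ3 : Matrix (Fin 2) (Fin 2) ℂ := !![1, 0; 0, -1]

/-- `Λ₊(ξ′) = ξ₁σ₁ + ξ₂σ₂ + i|ξ′|σ₃`. -/
def Λp (ξ₁ ξ₂ : ℝ) : Matrix (Fin 2) (Fin 2) ℂ :=
  (ξ₁ : ℂ) • σ1 + (ξ₂ : ℂ) • σ2 + (I * (Real.sqrt (ξ₁ ^ 2 + ξ₂ ^ 2) : ℝ)) • σ3

/-- `Λ₋(ξ′) = ξ₁σ₁ + ξ₂σ₂ − i|ξ′|σ₃`. -/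
def Λm (ξ₁ ξ₂ : ℝ) : Matrix (Fin 2) (Fin 2) ℂ :=
  (ξ₁ : ℂ) • σ1 + (ξ₂ : ℂ) • σ2 - (I * (Real.sqrt (ξ₁ ^ 2 + ξ₂ ^ 2) : ℝ)) • σ3

/-- `e = (1,0) ∈ ℂ²`. -/
def e : Fin 2 → ℂ := ![1, 0]

/-- `h₊,₁(ξ′) = (Λ₊(ξ′)e, 0) ∈ ℂ⁴` (upper ℂ² component, lower ℂ² component). -/
def hp1 (ξ₁ ξ₂ : ℝ) : (Fin 2 ⊕ Fin 2) → ℂ := Sum.elim ((Λp ξ₁ ξ₂).mulVec e) 0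
/-- `h₊,₂(ξ′) = (0, Λ₊(ξ′)e)`. -/
def hp2 (ξ₁ ξ₂ : ℝ) : (Fin 2 ⊕ Fin 2) → ℂ := Sum.elim 0 ((Λp ξ₁ ξ₂).mulVec e)
/-- `h₋,₁(ξ′) = (Λ₋(ξ′)e, 0)`. -/
def hm1 (ξ₁ ξ₂ : ℝ) : (Fin 2 ⊕ Fin 2) → ℂ := Sum.elim ((Λm ξ₁ ξ₂).mulVec e) 0
/-- `h₋,₂(ξ′) = (0, Λ₋(ξ′)e)`. -/
def hm2 (ξ₁ ξ₂ : ℝ) : (Fin 2 ⊕ Fin 2) → ℂ := Sum.elim 0 ((Λm ξ₁ ξ₂).mulVec e)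

/-- the four vectors `h₊,₁, h₊,₂, h₋,₁, h₋,₂` are pairwise orthogonal in `ℂ⁴`
(w.r.t. `⟨u,v⟩ = Σᵢ uᵢ · conj(vᵢ)`) and each has squared norm `2|ξ′|²`. -/
theorem h_orthogonal_and_norm (ξ₁ ξ₂ : ℝ) :
    (∀ i j : Fin 4, i ≠ j →
      ∑ k, (![hp1 ξ₁ ξ₂, hp2 ξ₁ ξ₂, hm1 ξ₁ ξ₂, hm2 ξ₁ ξ₂] i k) *
        (starRingEnd ℂ) (![hp1 ξ₁ ξ₂, hp2 ξ₁ ξ₂, hm1 ξ₁ ξ₂, hm2 ξ₁ ξ₂] j k) = 0) ∧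
    (∀ i : Fin 4,
      ∑ k, (![hp1 ξ₁ ξ₂, hp2 ξ₁ ξ₂, hm1 ξ₁ ξ₂, hm2 ξ₁ ξ₂] i k) *
        (starRingEnd ℂ) (![hp1 ξ₁ ξ₂, hp2 ξ₁ ξ₂, hm1 ξ₁ ξ₂, hm2 ξ₁ ξ₂] i k)
        = ((2 * (ξ₁ ^ 2 + ξ₂ ^ 2) : ℝ) : ℂ)) := by
  have hsq : ((Real.sqrt (ξ₁ ^ 2 + ξ₂ ^ 2) : ℝ) : ℂ) ^ 2 = ((ξ₁:ℂ)^2 + (ξ₂:ℂ)^2) := by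
    rw [← Complex.ofReal_pow, Real.sq_sqrt (by positivity)]
    push_cast; ring
  constructor
  · intro i j hij
    fin_cases i <;> fin_cases j <;> simp_all [hp1, hp2, hm1, hm2, Λp, Λm, σ1, σ2, σ3,
      Fintype.sum_sum_type, mulVec, dotProduct, e, Fin.sum_univ_two, Complex.I_sq, map_add, _root_.map_mul, map_sub,
      Complex.conj_ofReal] <;>
      linear_combination (((Real.sqrt (ξ₁ ^ 2 + ξ₂ ^ 2) : ℝ) : ℂ) ^ 2 - (ξ₂ : ℂ) ^ 2) *
        Complex.I_sq - hsq
  · intro i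
    fin_cases i <;> simp_all [hp1, hp2, hm1, hm2, Λp, Λm, σ1, σ2, σ3,
      Fintype.sum_sum_type, mulVec, dotProduct, e, Fin.sum_univ_two, Complex.I_sq, map_add, _root_.map_mul, map_sub,
      Complex.conj_ofReal] <;> push_cast <;>
      linear_combination (-((Real.sqrt (ξ₁ ^ 2 + ξ₂ ^ 2) : ℝ) : ℂ) ^ 2 - (ξ₂ : ℂ) ^ 2) *
        Complex.I_sq + hsq
end
end

section
/- For every ξ′ = (ξ₁,ξ₂) ∈ ℝ² and each j ∈ {1,2}, the ℂ⁴-valued functions ψ₊,ⱼ(z) = h₊,ⱼ(ξ′)·exp(|ξ′|z) and ψ₋,ⱼ(z) = h₋,ⱼ(ξ′)·exp(−|ξ′|z) satisfy, for every z ∈ ℝ, the first-order system (ξ₁α₁ + ξ₂α₂)ψ(z) + i·α₃·(dψ/dz)(z) = 0. -/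
open Matrix Complex

noncomputable section

/-- Dirac matrices, as 4×4 block matrices indexed by `Fin 2 ⊕ Fin 2`. -/
def α1 : Matrix (Fin 2 ⊕ Fin 2) (Fin 2 ⊕ Fin 2) ℂ := Matrix.fromBlocks 0 σ1 σ1 0
def α2 : Matrix (Fin 2 ⊕ Fin 2) (Fin 2 ⊕ Fin 2) ℂ := Matrix.fromBlocks 0 σ2 σ2 0
def α3 : Matrix (Fin 2 ⊕ Fin 2) (Fin 2 ⊕ Fin 2) ℂ := Matrix.fromBlocks 0 σ3 σ3 0

/-- `h₊,ⱼ(ξ′)`, `j = 1, 2`. -/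
def hp (ξ₁ ξ₂ : ℝ) : Fin 2 → ((Fin 2 ⊕ Fin 2) → ℂ) :=
  ![Sum.elim ((Λp ξ₁ ξ₂).mulVec e) 0, Sum.elim 0 ((Λp ξ₁ ξ₂).mulVec e)]

/-- `h₋,ⱼ(ξ′)`, `j = 1, 2`. -/
def hm (ξ₁ ξ₂ : ℝ) : Fin 2 → ((Fin 2 ⊕ Fin 2) → ℂ) :=
  ![Sum.elim ((Λm ξ₁ ξ₂).mulVec e) 0, Sum.elim 0 ((Λm ξ₁ ξ₂).mulVec e)]

set_option maxHeartbeats 2000000 in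
/-- the functions `ψ₊,ⱼ(z) = h₊,ⱼ(ξ′)·exp(|ξ′|z)` and
`ψ₋,ⱼ(z) = h₋,ⱼ(ξ′)·exp(−|ξ′|z)` solve `(ξ₁α₁ + ξ₂α₂)ψ(z) + i·α₃·ψ′(z) = 0` on ℝ. -/
theorem psi_solves_system (ξ₁ ξ₂ : ℝ) (j : Fin 2) :
    (∀ z : ℝ,
      ((ξ₁ : ℂ) • α1 + (ξ₂ : ℂ) • α2).mulVec
          ((fun t : ℝ => Real.exp (Real.sqrt (ξ₁ ^ 2 + ξ₂ ^ 2) * t) • hp ξ₁ ξ₂ j) z)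
        + I • α3.mulVec
            (deriv (fun t : ℝ => Real.exp (Real.sqrt (ξ₁ ^ 2 + ξ₂ ^ 2) * t) • hp ξ₁ ξ₂ j) z)
        = 0) ∧
    (∀ z : ℝ,
      ((ξ₁ : ℂ) • α1 + (ξ₂ : ℂ) • α2).mulVec
          ((fun t : ℝ => Real.exp (-(Real.sqrt (ξ₁ ^ 2 + ξ₂ ^ 2)) * t) • hm ξ₁ ξ₂ j) z)
        + I • α3.mulVec
            (deriv (fun t : ℝ => Real.exp (-(Real.sqrt (ξ₁ ^ 2 + ξ₂ ^ 2)) * t) • hm ξ₁ ξ₂ j) z)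
        = 0) := by
  have hderiv : ∀ (c : ℝ) (v : (Fin 2 ⊕ Fin 2) → ℂ) (z : ℝ),
      deriv (fun t : ℝ => Real.exp (c * t) • v) z = (c * Real.exp (c * z)) • v := by
    intro c v z
    have h1 : HasDerivAt (fun t : ℝ => Real.exp (c * t)) (c * Real.exp (c * z)) z := by
      have := (Real.hasDerivAt_exp (c * z)).comp z ((hasDerivAt_id z).const_mul c)
      exact this.congr_deriv (by ring)
    exact (h1.smul_const v).deriv
  have hsq : (Real.sqrt (ξ₁ ^ 2 + ξ₂ ^ 2)) ^ 2 = ξ₁ ^ 2 + ξ₂ ^ 2 :=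
    Real.sq_sqrt (by positivity)
  have hsqC : ((Real.sqrt (ξ₁ ^ 2 + ξ₂ ^ 2) : ℝ) : ℂ) ^ 2 = (ξ₁ : ℂ) ^ 2 + (ξ₂ : ℂ) ^ 2 := by
    rw [← Complex.ofReal_pow, hsq]; push_cast; ring
  constructor <;> intro z <;> rw [hderiv] <;> funext i <;>
    fin_cases j <;> rcases i with i | i <;> fin_cases i <;>
    simp [α1, α2, α3, σ1, σ2, σ3, hp, hm, Λp, Λm, e, mulVec, dotProduct,
      Fin.sum_univ_two, Matrix.fromBlocks, Pi.smul_apply, smul_eq_mul] <;>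
    ring_nf <;>
    simp only [Complex.I_sq, hsqC] <;> ring
end
end

section
/- Let γ, ε ∈ ℝ and let ξ′ = (ξ₁,ξ₂) ∈ ℝ² with ξ′ ≠ 0. Define a₊ = (1/2)Γ − i·α₃ and a₋ = (1/2)Γ + i·α₃ where Γ = diag(2γ·I₂, 2ε·I₂), and set 𝔢₁ = a₊·h₋,₁(ξ′), 𝔢₂ = a₊·h₋,₂(ξ′), 𝔢₃ = a₋·h₊,₁(ξ′), 𝔢₄ = a₋·h₊,₂(ξ′). Then the family (𝔢₁, 𝔢₂, 𝔢₃, 𝔢₄) is linearly independent in ℂ⁴ if and only if γ·ε ≠ 1. -/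
open Matrix Complex

noncomputable section

/-- The interaction matrix `Γ = diag(2γ·I₂, 2ε·I₂)`. -/
def Γmat (γ ε : ℝ) : Matrix (Fin 2 ⊕ Fin 2) (Fin 2 ⊕ Fin 2) ℂ :=
  Matrix.fromBlocks ((2 * γ : ℝ) • 1) 0 0 ((2 * ε : ℝ) • 1)

/-- `a₊ = (1/2)Γ − i·α₃`. -/
def aP (γ ε : ℝ) : Matrix (Fin 2 ⊕ Fin 2) (Fin 2 ⊕ Fin 2) ℂ :=
  (1 / 2 : ℂ) • Γmat γ ε - I • α3

/-- `a₋ = (1/2)Γ + i·α₃`. -/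
def aM (γ ε : ℝ) : Matrix (Fin 2 ⊕ Fin 2) (Fin 2 ⊕ Fin 2) ℂ :=
  (1 / 2 : ℂ) • Γmat γ ε + I • α3


lemma det_aux (γ ε R : ℝ) (w : ℂ) (hR : R ≠ 0) (hw : w ≠ 0) :
    LinearIndependent ℂ
      (fun i => (!![-(I*γ*R), γ*w, -(R:ℂ), I*w;
                    -(R:ℂ), I*w, -(I*ε*R), ε*w;
                    I*γ*R, γ*w, -(R:ℂ), -(I*w);
                    -(R:ℂ), -(I*w), I*ε*R, ε*w] : Matrix (Fin 4) (Fin 4) ℂ) i)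
      ↔ γ * ε ≠ 1 := by
  change LinearIndependent ℂ (Matrix.row _) ↔ _
  rw [Matrix.linearIndependent_rows_iff_isUnit, Matrix.isUnit_iff_isUnit_det,
    isUnit_iff_ne_zero]
  have hdet : (!![-(I*γ*R), γ*w, -(R:ℂ), I*w;
                    -(R:ℂ), I*w, -(I*ε*R), ε*w;
                    I*γ*R, γ*w, -(R:ℂ), -(I*w);
                    -(R:ℂ), -(I*w), I*ε*R, ε*w] : Matrix (Fin 4) (Fin 4) ℂ).det
      = 4 * (R:ℂ)^2 * w^2 * (1 - (γ:ℂ)*(ε:ℂ))^2 := by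
    simp [Matrix.det_succ_row_zero, Fin.sum_univ_succ, Fin.succAbove]
    ring_nf
    simp [Complex.I_sq]
  rw [hdet]
  have hRc : (R:ℂ) ≠ 0 := Complex.ofReal_ne_zero.mpr hR
  constructor
  · intro h hge
    apply h
    have h1 : (γ:ℂ) * (ε:ℂ) = 1 := by
      rw [← Complex.ofReal_mul, hge]; norm_num
    rw [h1]; ring
  · intro h hzero
    have hfac : (1 - (γ:ℂ)*(ε:ℂ)) = 0 := by
      by_contra hne
      exact (mul_ne_zero (mul_ne_zero (mul_ne_zero (by norm_num : (4:ℂ) ≠ 0)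
        (pow_ne_zero 2 hRc)) (pow_ne_zero 2 hw)) (pow_ne_zero 2 hne)) hzero
    apply h
    have h1 : (γ:ℂ)*(ε:ℂ) = 1 := by linear_combination -hfac
    exact Complex.ofReal_injective (by push_cast; rw [h1] : ((γ*ε : ℝ) : ℂ) = ((1:ℝ):ℂ))

lemma Lm_e (ξ₁ ξ₂ : ℝ) : (Λm ξ₁ ξ₂).mulVec e
    = ![-(I * (Real.sqrt (ξ₁ ^ 2 + ξ₂ ^ 2) : ℝ)), (ξ₁:ℂ) + (ξ₂:ℂ) * I] := by
  funext i
  fin_cases i <;>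
    simp [Λm, σ1, σ2, σ3, e, Matrix.mulVec, dotProduct, Fin.sum_univ_two]

lemma Lp_e (ξ₁ ξ₂ : ℝ) : (Λp ξ₁ ξ₂).mulVec e
    = ![I * (Real.sqrt (ξ₁ ^ 2 + ξ₂ ^ 2) : ℝ), (ξ₁:ℂ) + (ξ₂:ℂ) * I] := by
  funext i
  fin_cases i <;>
    simp [Λp, σ1, σ2, σ3, e, Matrix.mulVec, dotProduct, Fin.sum_univ_two]

lemma aP_elim (γ ε : ℝ) (x y : Fin 2 → ℂ) :
    (aP γ ε).mulVec (Sum.elim x y)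
      = Sum.elim ((γ:ℂ) • x - I • σ3.mulVec y) ((ε:ℂ) • y - I • σ3.mulVec x) := by
  funext i
  rcases i with i | i <;> fin_cases i <;>
    simp [aP, Γmat, α3, σ3, Matrix.mulVec, dotProduct, Fintype.sum_sum_type,
      Fin.sum_univ_two, Matrix.fromBlocks, Matrix.vecHead, Matrix.vecTail] <;> ring

lemma aM_elim (γ ε : ℝ) (x y : Fin 2 → ℂ) :
    (aM γ ε).mulVec (Sum.elim x y)
      = Sum.elim ((γ:ℂ) • x + I • σ3.mulVec y) ((ε:ℂ) • y + I • σ3.mulVec x) := by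
  funext i
  rcases i with i | i <;> fin_cases i <;>
    simp [aM, Γmat, α3, σ3, Matrix.mulVec, dotProduct, Fintype.sum_sum_type,
      Fin.sum_univ_two, Matrix.fromBlocks, Matrix.vecHead, Matrix.vecTail] <;> ring

lemma σ3_mulVec (a b : ℂ) : σ3.mulVec ![a, b] = ![a, -b] := by
  funext i
  fin_cases i <;>
    simp [σ3, Matrix.mulVec, dotProduct, Fin.sum_univ_two]

lemma li_iff_rows (v : Fin 4 → ((Fin 2 ⊕ Fin 2) → ℂ)) :
    LinearIndependent ℂ v ↔
      LinearIndependent ℂ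
        (fun i => Matrix.of (fun i j => v i (finSumFinEquiv.symm j)) i) :=
  ((LinearEquiv.funCongrLeft ℂ ℂ finSumFinEquiv.symm).toLinearMap.linearIndependent_iff
    (LinearEquiv.funCongrLeft ℂ ℂ finSumFinEquiv.symm).ker).symm

lemma rows_eq (x1 y1 x2 y2 x3 y3 x4 y4 : Fin 2 → ℂ) :
    Matrix.of (fun i j => ![Sum.elim x1 y1, Sum.elim x2 y2, Sum.elim x3 y3, Sum.elim x4 y4]
        i (finSumFinEquiv.symm j))
      = !![x1 0, x1 1, y1 0, y1 1;
           x2 0, x2 1, y2 0, y2 1;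
           x3 0, x3 1, y3 0, y3 1;
           x4 0, x4 1, y4 0, y4 1] := by
  funext i j
  fin_cases i <;> fin_cases j <;>
    rfl

/-- Lopatinsky–Shapiro condition: for `ξ′ ≠ 0`, the family
`(𝔢₁, 𝔢₂, 𝔢₃, 𝔢₄)` is linearly independent in `ℂ⁴` iff `γ·ε ≠ 1`. -/
theorem lopatinsky_shapiro_iff (γ ε ξ₁ ξ₂ : ℝ) (hξ : ¬(ξ₁ = 0 ∧ ξ₂ = 0)) :
    LinearIndependent ℂ
        ![(aP γ ε).mulVec (hm1 ξ₁ ξ₂), (aP γ ε).mulVec (hm2 ξ₁ ξ₂),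
          (aM γ ε).mulVec (hp1 ξ₁ ξ₂), (aM γ ε).mulVec (hp2 ξ₁ ξ₂)]
      ↔ γ * ε ≠ 1 := by
  have hr : Real.sqrt (ξ₁ ^ 2 + ξ₂ ^ 2) ≠ 0 := by
    have h1 : (0:ℝ) < ξ₁ ^ 2 + ξ₂ ^ 2 := by
      rcases not_and_or.mp hξ with h | h
      · positivity
      · positivity
    exact ne_of_gt (Real.sqrt_pos.mpr h1)
  have hw : (ξ₁ : ℂ) + (ξ₂ : ℂ) * I ≠ 0 := by
    intro h
    apply hξ
    constructor
    · have := congrArg Complex.re h; simpa using this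
    · have := congrArg Complex.im h; simpa using this
  set R : ℝ := Real.sqrt (ξ₁ ^ 2 + ξ₂ ^ 2) with hRdef
  set w : ℂ := (ξ₁ : ℂ) + (ξ₂ : ℂ) * I with hwdef
  have e1 : (aP γ ε).mulVec (hm1 ξ₁ ξ₂)
      = Sum.elim ![-(I*γ*R), γ*w] ![-(R:ℂ), I*w] := by
    show (aP γ ε).mulVec (Sum.elim ((Λm ξ₁ ξ₂).mulVec e) 0) = _
    rw [Lm_e, aP_elim, Matrix.mulVec_zero, ← hRdef, ← hwdef, σ3_mulVec]
    funext i
    rcases i with i | i <;> fin_cases i <;> (try simp [← mul_assoc, Complex.I_mul_I]) <;> (try ring) <;> (try tauto)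
  have e2 : (aP γ ε).mulVec (hm2 ξ₁ ξ₂)
      = Sum.elim ![-(R:ℂ), I*w] ![-(I*ε*R), ε*w] := by
    show (aP γ ε).mulVec (Sum.elim 0 ((Λm ξ₁ ξ₂).mulVec e)) = _
    rw [Lm_e, aP_elim, Matrix.mulVec_zero, ← hRdef, ← hwdef, σ3_mulVec]
    funext i
    rcases i with i | i <;> fin_cases i <;> (try simp [← mul_assoc, Complex.I_mul_I]) <;> (try ring) <;> (try tauto)
  have e3 : (aM γ ε).mulVec (hp1 ξ₁ ξ₂)
      = Sum.elim ![I*γ*R, γ*w] ![-(R:ℂ), -(I*w)] := by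
    show (aM γ ε).mulVec (Sum.elim ((Λp ξ₁ ξ₂).mulVec e) 0) = _
    rw [Lp_e, aM_elim, Matrix.mulVec_zero, ← hRdef, ← hwdef, σ3_mulVec]
    funext i
    rcases i with i | i <;> fin_cases i <;> (try simp [← mul_assoc, Complex.I_mul_I]) <;> (try ring) <;> (try tauto)
  have e4 : (aM γ ε).mulVec (hp2 ξ₁ ξ₂)
      = Sum.elim ![-(R:ℂ), -(I*w)] ![I*ε*R, ε*w] := by
    show (aM γ ε).mulVec (Sum.elim 0 ((Λp ξ₁ ξ₂).mulVec e)) = _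
    rw [Lp_e, aM_elim, Matrix.mulVec_zero, ← hRdef, ← hwdef, σ3_mulVec]
    funext i
    rcases i with i | i <;> fin_cases i <;> (try simp [← mul_assoc, Complex.I_mul_I]) <;> (try ring) <;> (try tauto)
  rw [e1, e2, e3, e4, li_iff_rows, rows_eq]
  simp only [Matrix.cons_val_zero, Matrix.cons_val_one, Matrix.head_cons]
  exact det_aux γ ε R w hr hw
end
end

section
/- Let f : ℝ³ → ℂ be continuously differentiable and bounded, and suppose f is slowly oscillating at infinity, i.e. the gradient of f tends to 0 as ‖x‖ → ∞. Let (hₘ) be a sequence in ℝ³ with ‖hₘ‖ → ∞ and suppose there is a function f^h : ℝ³ → ℂ such that x ↦ f(x + hₘ) converges to f^h uniformly on every compact subset of ℝ³. Then f^h is a constant function. -/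
open Filter Topology

noncomputable section

/-- if `f ∈ SO¹(ℝ³)` (bounded, continuously differentiable and slowly
oscillating at infinity, i.e. its derivative tends to `0` at infinity) and the translates
`x ↦ f(x + hₘ)` along a sequence `hₘ → ∞` converge, uniformly on every compact set,
to a limit function `f^h`, then `f^h` is constant. -/
theorem limit_function_of_slowly_oscillating_is_constant
    (f : EuclideanSpace ℝ (Fin 3) → ℂ)
    (hf : ContDiff ℝ 1 f)
    (hfb : ∃ C : ℝ, ∀ x, ‖f x‖ ≤ C)
    (hso : Tendsto (fun x => ‖fderiv ℝ f x‖) (Bornology.cobounded (EuclideanSpace ℝ (Fin 3)))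
      (𝓝 0))
    (hseq : ℕ → EuclideanSpace ℝ (Fin 3))
    (hseq_inf : Tendsto (fun m => ‖hseq m‖) atTop atTop)
    (fh : EuclideanSpace ℝ (Fin 3) → ℂ)
    (hconv : ∀ K : Set (EuclideanSpace ℝ (Fin 3)), IsCompact K →
      TendstoUniformlyOn (fun m x => f (x + hseq m)) fh atTop K) :
    ∃ c : ℂ, ∀ x, fh x = c := by
  refine ⟨fh 0, fun x => ?_⟩
  have h1 : Tendsto (fun m => f (x + hseq m)) atTop (𝓝 (fh x)) :=
    (hconv {x} isCompact_singleton).tendsto_at rfl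
  have h0 : Tendsto (fun m => f (0 + hseq m)) atTop (𝓝 (fh 0)) :=
    (hconv {0} isCompact_singleton).tendsto_at rfl
  simp only [zero_add] at h0
  have hdiff : Tendsto (fun m => f (x + hseq m) - f (hseq m)) atTop (𝓝 0) := by
    rw [Metric.tendsto_atTop]
    intro ε hε
    have hε' : 0 < ε / (‖x‖ + 1) := by positivity
    -- find R with ‖fderiv f y‖ < ε' for ‖y‖ ≥ R
    have hev : ∀ᶠ y in Bornology.cobounded (EuclideanSpace ℝ (Fin 3)),
        ‖fderiv ℝ f y‖ < ε / (‖x‖ + 1) := by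
      have := hso.eventually (eventually_lt_nhds hε')
      simpa using this
    obtain ⟨R, -, hR⟩ := (Filter.hasBasis_cobounded_norm).eventually_iff.mp hev
    obtain ⟨M, hM⟩ := Filter.eventually_atTop.mp (hseq_inf.eventually_ge_atTop (R + ‖x‖))
    refine ⟨M, fun m hm => ?_⟩
    have hmm := hM m hm
    have key : ‖f (x + hseq m) - f (hseq m)‖ ≤ (ε / (‖x‖ + 1)) * ‖x‖ := by
      have hs : Convex ℝ (Metric.closedBall (hseq m) ‖x‖) := convex_closedBall _ _
      have hbd : ∀ y ∈ Metric.closedBall (hseq m) ‖x‖, ‖fderiv ℝ f y‖ ≤ ε / (‖x‖ + 1) := by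
        intro y hy
        refine le_of_lt (hR ?_)
        simp only [Set.mem_setOf_eq]
        have : ‖hseq m‖ - ‖x‖ ≤ ‖y‖ := by
          have hd : ‖y - hseq m‖ ≤ ‖x‖ := by
            simpa [dist_eq_norm] using Metric.mem_closedBall.mp hy
          have := norm_sub_norm_le (hseq m) y
          rw [norm_sub_rev] at hd
          linarith [norm_sub_norm_le (hseq m) y, hd]
        linarith
      have hdf : ∀ y ∈ Metric.closedBall (hseq m) ‖x‖, DifferentiableAt ℝ f y :=
        fun y _ => (hf.differentiable one_ne_zero) y
      have h1m : x + hseq m ∈ Metric.closedBall (hseq m) ‖x‖ := by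
        simp [Metric.mem_closedBall, dist_eq_norm]
      have h2m : hseq m ∈ Metric.closedBall (hseq m) ‖x‖ :=
        Metric.mem_closedBall_self (norm_nonneg x)
      have := hs.norm_image_sub_le_of_norm_fderiv_le hdf hbd h2m h1m
      simpa using this
    have hlt : (ε / (‖x‖ + 1)) * ‖x‖ < ε := by
      rw [div_mul_eq_mul_div, div_lt_iff₀ (by positivity)]
      nlinarith [norm_nonneg x]
    calc dist (f (x + hseq m) - f (hseq m)) 0
        = ‖f (x + hseq m) - f (hseq m)‖ := by simp [dist_eq_norm]
      _ ≤ (ε / (‖x‖ + 1)) * ‖x‖ := key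
      _ < ε := hlt
  have := tendsto_nhds_unique (h1.sub h0) hdiff
  have hx0 : fh x - fh 0 = 0 := this
  linear_combination hx0
end
end
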